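/- Correctness of the marked-ancestor encoding: let T be a rooted ordered tree with a subset M of marked nodes, encoded in DFS order as balanced parentheses B (over all nodes) and D (over marked nodes only, in the same DFS order). For any unmarked node x, let y be the rightmost marked parenthesis position in B at or before open(x). Then: (i) if no such y exists, x has no marked proper ancestor; (ii) if y is an open parenthesis, the node of y is the lowest marked ancestor of x; (iii) if y is a close parenthesis, the lowest marked ancestor of x is the marked node whose pair in D most tightly encloses the pair in D corresponding to y (and x has no marked ancestor if no enclosing pair exists in D). -/

import Mathlib

/-- Finite rooted ordered trees. -/
inductive RTree where
  | node : List RTree → RTree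

/-- Balanced-parentheses encoding via DFS: `true` = '(' on entering a node,
`false` = ')' on leaving it. -/
def RTree.enc : RTree → List Bool
  | .node ts => true :: (ts.attach.map (fun c => RTree.enc c.1)).flatten ++ [false]
decreasing_by
  simp only [RTree.node.sizeOf_spec]
  have := List.sizeOf_lt_of_mem c.2
  omega

/-- The subtree at a path of child indices (if it exists). -/
def RTree.subtreeAt : RTree → List ℕ → Option RTree
  | t, [] => some t
  | .node ts, i :: p =>
    match ts[i]? with
    | some c => RTree.subtreeAt c p
    | none => none

/-- The path `p` identifies a node of the tree `t`. -/
def RTree.Valid (t : RTree) (p : List ℕ) : Prop := (t.subtreeAt p).isSome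

/-- Position of the opening parenthesis of the node at path `p` in `t.enc`. -/
def RTree.openPos : RTree → List ℕ → Option ℕ
  | _, [] => some 0
  | .node ts, i :: p =>
    (ts[i]?).bind fun c =>
      (RTree.openPos c p).map fun k =>
        1 + (((ts.take i).map (fun s => s.enc.length)).sum) + k

/-- Position of the closing parenthesis of the node at path `p` in `t.enc`. -/
def RTree.closePos (t : RTree) (p : List ℕ) : Option ℕ :=
  (t.openPos p).bind fun o => (t.subtreeAt p).map fun s => o + s.enc.length - 1

/-- A sequence of parentheses (`true` = '(', `false` = ')') is balanced:
every prefix has at least as many '(' as ')' and the total counts are equal. -/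
def BalancedBP (l : List Bool) : Prop :=
  (∀ pre : List Bool, pre <+: l → pre.count false ≤ pre.count true) ∧
    l.count true = l.count false

/-- `u` is a (proper) ancestor of `v`: the path `u` is a proper prefix of the path `v`. -/
def StrictAnc (u v : List ℕ) : Prop := u <+: v ∧ u ≠ v

/-- `i` is a parenthesis position (in `t.enc`) belonging to a marked node. -/
def MarkedPos (t : RTree) (Marked : List ℕ → Prop) (i : ℕ) : Prop :=
  ∃ p : List ℕ, t.Valid p ∧ Marked p ∧ (t.openPos p = some i ∨ t.closePos p = some i)

theorem RTree.enc_eq (ts : List RTree) :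
    (RTree.node ts).enc = true :: (ts.map RTree.enc).flatten ++ [false] := by
  rw [RTree.enc]
  congr 3
  exact List.attach_map_val (l := ts) (f := RTree.enc)

theorem RTree.two_le_enc_length (t : RTree) : 2 ≤ t.enc.length := by
  obtain ⟨ts⟩ := t
  rw [RTree.enc_eq]
  simp

/-- sum of encoding lengths of first (j+1) children = S_j + |c.enc| -/
theorem sum_take_succ (ts : List RTree) (j : ℕ) (c : RTree) (hc : ts[j]? = some c) :
    ((ts.take (j+1)).map (fun s => s.enc.length)).sum
      = ((ts.take j).map (fun s => s.enc.length)).sum + c.enc.length := by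
  rw [List.take_succ, hc]
  simp

theorem sum_take_mono (ts : List RTree) {a b : ℕ} (h : a ≤ b) :
    ((ts.take a).map (fun s => s.enc.length)).sum
      ≤ ((ts.take b).map (fun s => s.enc.length)).sum := by
  have h1 : ts.take b = ts.take a ++ (ts.take b).drop a := by
    conv_lhs => rw [← List.take_append_drop a (ts.take b)]
    rw [List.take_take, min_eq_left h]
  rw [h1, List.map_append, List.sum_append]
  exact Nat.le_add_right _ _

theorem sum_take_le_flatten (ts : List RTree) (a : ℕ) :
    ((ts.take a).map (fun s => s.enc.length)).sum ≤ (ts.map RTree.enc).flatten.length := by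
  rw [List.length_flatten, List.map_map]
  have h2 : ((ts.take (max a ts.length)).map (fun s => s.enc.length)).sum
      = (ts.map (List.length ∘ RTree.enc)).sum := by
    rw [List.take_of_length_le (le_max_right _ _)]
    rfl
  rw [← h2]
  exact sum_take_mono ts (le_max_left _ _)

theorem List.decomp {α : Type*} (l : List α) (i : ℕ) (c : α) (h : l[i]? = some c) :
    l = l.take i ++ c :: l.drop (i+1) := by
  obtain ⟨hi, hc⟩ := List.getElem?_eq_some_iff.1 h
  conv_lhs => rw [← List.take_append_drop i l, List.drop_eq_getElem_cons hi, hc]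

theorem RTree.valid_cons {ts : List RTree} {i : ℕ} {p : List ℕ}
    (h : (RTree.node ts).Valid (i :: p)) : ∃ c, ts[i]? = some c ∧ c.Valid p := by
  unfold RTree.Valid at h
  cases hc : ts[i]? with
  | none => simp [RTree.subtreeAt, hc] at h
  | some c =>
    refine ⟨c, rfl, ?_⟩
    unfold RTree.Valid
    simpa [RTree.subtreeAt, hc] using h

theorem RTree.subtreeAt_cons {ts : List RTree} {i : ℕ} (p : List ℕ) {c : RTree}
    (hc : ts[i]? = some c) : (RTree.node ts).subtreeAt (i :: p) = c.subtreeAt p := by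
  simp [RTree.subtreeAt, hc]

theorem RTree.openPos_cons {ts : List RTree} {i : ℕ} (p : List ℕ) {c : RTree}
    (hc : ts[i]? = some c) :
    (RTree.node ts).openPos (i :: p) = (c.openPos p).map
      (fun k => 1 + (((ts.take i).map (fun s => s.enc.length)).sum) + k) := by
  simp [RTree.openPos, hc]

/-- flatten decomposition around child i -/
theorem RTree.flatten_decomp {ts : List RTree} {i : ℕ} {c : RTree} (hc : ts[i]? = some c) :
    (ts.map RTree.enc).flatten
      = ((ts.take i).map RTree.enc).flatten ++ (c.enc ++ ((ts.drop (i+1)).map RTree.enc).flatten) := by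
  conv_lhs => rw [List.decomp ts i c hc]
  simp

theorem RTree.length_flatten_take (ts : List RTree) (i : ℕ) :
    ((ts.take i).map RTree.enc).flatten.length
      = ((ts.take i).map (fun s => s.enc.length)).sum := by
  rw [List.length_flatten, List.map_map]; rfl

theorem RTree.spec : ∀ (p : List ℕ) (t : RTree), t.Valid p →
    ∃ o s, t.openPos p = some o ∧ t.subtreeAt p = some s ∧
      o + s.enc.length ≤ t.enc.length ∧ (t.enc.drop o).take s.enc.length = s.enc
  | [], t, _ => ⟨0, t, by rw [RTree.openPos], by cases t; rw [RTree.subtreeAt], by simp, by simp⟩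
  | i :: p, .node ts, h => by
    obtain ⟨c, hc, hv⟩ := RTree.valid_cons h
    obtain ⟨k, s, hk, hs, hle, hsl⟩ := RTree.spec p c hv
    set S := ((ts.take i).map (fun s => s.enc.length)).sum with hS
    have henc : (RTree.node ts).enc
        = (true :: ((ts.take i).map RTree.enc).flatten)
          ++ (c.enc ++ (((ts.drop (i+1)).map RTree.enc).flatten ++ [false])) := by
      rw [RTree.enc_eq, RTree.flatten_decomp hc]
      simp
    have hlenA : (true :: ((ts.take i).map RTree.enc).flatten).length = 1 + S := by
      rw [List.length_cons, RTree.length_flatten_take]; omega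
    refine ⟨1 + S + k, s, ?_, ?_, ?_, ?_⟩
    · rw [RTree.openPos_cons p hc, hk]; rfl
    · rw [RTree.subtreeAt_cons p hc]; exact hs
    · rw [henc]
      simp only [List.length_append, hlenA]
      omega
    · rw [henc]
      rw [show 1 + S + k = (true :: ((ts.take i).map RTree.enc).flatten).length + k by omega]
      rw [List.drop_length_add_append]
      rw [List.drop_append_of_le_length (by omega)]
      rw [List.take_append_of_le_length (by simp; omega)]
      exact hsl

theorem RTree.valid_of_subtreeAt {t : RTree} {p : List ℕ} {s : RTree}
    (hs : t.subtreeAt p = some s) : t.Valid p := by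
  unfold RTree.Valid; rw [hs]; rfl

theorem RTree.spec' {t : RTree} {p : List ℕ} {o : ℕ} {s : RTree}
    (ho : t.openPos p = some o) (hs : t.subtreeAt p = some s) :
    o + s.enc.length ≤ t.enc.length ∧ (t.enc.drop o).take s.enc.length = s.enc := by
  obtain ⟨o', s', ho', hs', h1, h2⟩ := RTree.spec p t (RTree.valid_of_subtreeAt hs)
  rw [ho] at ho'; rw [hs] at hs'
  obtain rfl : o = o' := by injection ho'
  obtain rfl : s = s' := by injection hs'
  exact ⟨h1, h2⟩

theorem RTree.char_open {t : RTree} {p : List ℕ} {o : ℕ} {s : RTree}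
    (ho : t.openPos p = some o) (hs : t.subtreeAt p = some s) :
    t.enc[o]? = some true := by
  obtain ⟨h1, h2⟩ := RTree.spec' ho hs
  have hL : 2 ≤ s.enc.length := RTree.two_le_enc_length s
  have key : t.enc[o]? = ((t.enc.drop o).take s.enc.length)[0]? := by
    rw [List.getElem?_take, if_pos (by omega), List.getElem?_drop]
    norm_num
  rw [key, h2]
  obtain ⟨us⟩ := s
  rw [RTree.enc_eq]
  simp

theorem RTree.char_close {t : RTree} {p : List ℕ} {o : ℕ} {s : RTree}
    (ho : t.openPos p = some o) (hs : t.subtreeAt p = some s) :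
    t.enc[o + s.enc.length - 1]? = some false := by
  obtain ⟨h1, h2⟩ := RTree.spec' ho hs
  have hL : 2 ≤ s.enc.length := RTree.two_le_enc_length s
  have key : t.enc[o + s.enc.length - 1]? = ((t.enc.drop o).take s.enc.length)[s.enc.length - 1]? := by
    rw [List.getElem?_take, if_pos (by omega), List.getElem?_drop]
    congr 1; omega
  rw [key, h2]
  rw [← List.getLast?_eq_getElem?]
  obtain ⟨us⟩ := s
  rw [RTree.enc_eq, List.getLast?_concat]

/-- A proper descendant's interval lies strictly inside the enclosing parens. -/
theorem RTree.inner {t : RTree} {j : ℕ} {w : List ℕ} (h : t.Valid (j :: w)) :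
    ∃ k s, t.openPos (j :: w) = some k ∧ t.subtreeAt (j :: w) = some s ∧
      1 ≤ k ∧ k + s.enc.length + 1 ≤ t.enc.length := by
  obtain ⟨ts⟩ := t
  obtain ⟨c, hc, hv⟩ := RTree.valid_cons h
  obtain ⟨k', s, hk', hs', hle, -⟩ := RTree.spec w c hv
  set S := ((ts.take j).map (fun s => s.enc.length)).sum with hS
  refine ⟨1 + S + k', s, ?_, ?_, by omega, ?_⟩
  · rw [RTree.openPos_cons w hc, hk']; rfl
  · rw [RTree.subtreeAt_cons w hc]; exact hs'
  · have h1 : S + c.enc.length ≤ (ts.map RTree.enc).flatten.length := by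
      have := sum_take_le_flatten ts (j+1)
      rw [sum_take_succ ts j c hc] at this
      exact this
    rw [RTree.enc_eq]
    simp only [List.length_append, List.length_cons]
    omega

theorem RTree.subtreeAt_append : ∀ (u : List ℕ) (t : RTree) (w : List ℕ),
    t.subtreeAt (u ++ w) = (t.subtreeAt u).bind (·.subtreeAt w)
  | [], t, w => by cases t; rw [RTree.subtreeAt]; rfl
  | i :: u, .node ts, w => by
    cases hc : ts[i]? with
    | none => simp [RTree.subtreeAt, hc]
    | some c =>
      rw [show (i :: u) ++ w = i :: (u ++ w) from rfl, RTree.subtreeAt_cons (u ++ w) hc,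
        RTree.subtreeAt_cons u hc, RTree.subtreeAt_append u c w]

theorem RTree.openPos_append : ∀ (u : List ℕ) (t : RTree) (w : List ℕ) (c : RTree),
    t.subtreeAt u = some c →
    t.openPos (u ++ w) = (t.openPos u).bind fun o => (c.openPos w).map (o + ·)
  | [], t, w, c, hc => by
    obtain rfl : t = c := by cases t; simpa [RTree.subtreeAt] using hc
    rw [List.nil_append, RTree.openPos]
    cases t.openPos w <;> simp
  | i :: u, .node ts, w, c, hc => by
    cases hd : ts[i]? with
    | none => simp [RTree.subtreeAt, hd] at hc
    | some d =>
      rw [RTree.subtreeAt_cons u hd] at hc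
      rw [show (i :: u) ++ w = i :: (u ++ w) from rfl, RTree.openPos_cons (u ++ w) hd,
        RTree.openPos_cons u hd, RTree.openPos_append u d w c hc]
      cases d.openPos u with
      | none => rfl
      | some o =>
        cases c.openPos w with
        | none => rfl
        | some k => simp [Option.bind, Option.map]; omega

theorem RTree.valid_of_prefix {t : RTree} {u v : List ℕ} (h : u <+: v) (hv : t.Valid v) :
    t.Valid u := by
  obtain ⟨w, rfl⟩ := h
  unfold RTree.Valid at *
  rw [RTree.subtreeAt_append] at hv
  cases hs : t.subtreeAt u with
  | none => rw [hs] at hv; simp at hv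
  | some s => rfl

/-- Strict nesting of intervals for proper ancestors. -/
theorem RTree.nest_strict {t : RTree} {u v : List ℕ} (hpre : u <+: v) (hne : u ≠ v)
    {ou ov : ℕ} {su sv : RTree}
    (hou : t.openPos u = some ou) (hsu : t.subtreeAt u = some su)
    (hov : t.openPos v = some ov) (hsv : t.subtreeAt v = some sv) :
    ou < ov ∧ ov + sv.enc.length + 1 ≤ ou + su.enc.length := by
  obtain ⟨w, rfl⟩ := hpre
  have hw : w ≠ [] := by rintro rfl; simp at hne
  obtain ⟨j, w', rfl⟩ : ∃ j w', w = j :: w' := by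
    cases w with
    | nil => exact absurd rfl hw
    | cons j w' => exact ⟨j, w', rfl⟩
  have hsv' : su.subtreeAt (j :: w') = some sv := by
    rw [RTree.subtreeAt_append, hsu] at hsv
    exact hsv
  have hvalid : su.Valid (j :: w') := RTree.valid_of_subtreeAt hsv'
  obtain ⟨k, s, hk, hs, h1, h2⟩ := RTree.inner hvalid
  obtain rfl : s = sv := by rw [hs] at hsv'; injection hsv'
  have hov' : ov = ou + k := by
    rw [RTree.openPos_append u t (j :: w') su hsu, hou, hk] at hov
    simp at hov
    omega
  constructor
  · omega
  · obtain ⟨hle, -⟩ := RTree.spec' hou hsu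
    omega

/-- If `v`'s opening parenthesis lies within `u`'s interval, then `u` is an ancestor. -/
theorem RTree.ord : ∀ (u : List ℕ) (t : RTree) (v : List ℕ)
    {ou : ℕ} {su : RTree} {ov : ℕ},
    t.openPos u = some ou → t.subtreeAt u = some su → t.openPos v = some ov →
    t.Valid v → ou ≤ ov → ov < ou + su.enc.length → u <+: v
  | [], _, v, _, _, _, _, _, _, _, _, _ => List.nil_prefix
  | i :: u', .node ts, v, ou, su, ov, hou, hsu, hov, hvv, hle, hlt => by
    obtain ⟨c, hc, hvu⟩ := RTree.valid_cons (RTree.valid_of_subtreeAt hsu)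
    rw [RTree.subtreeAt_cons u' hc] at hsu
    rw [RTree.openPos_cons u' hc] at hou
    obtain ⟨ku, su', hku, hsu', hlequ, -⟩ := RTree.spec u' c hvu
    obtain rfl : su = su' := by rw [hsu] at hsu'; injection hsu'
    rw [hku] at hou
    simp only [Option.map_some, Option.some.injEq] at hou
    set Si := ((ts.take i).map (fun s => s.enc.length)).sum with hSi
    have hsu2 : 2 ≤ su.enc.length := RTree.two_le_enc_length su
    cases v with
    | nil =>
      rw [RTree.openPos] at hov
      obtain rfl : (0 : ℕ) = ov := by injection hov
      omega
    | cons j v' =>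
      obtain ⟨d, hd, hvv'⟩ := RTree.valid_cons hvv
      rw [RTree.openPos_cons v' hd] at hov
      obtain ⟨kv, sv, hkv, hsv, hleqv, -⟩ := RTree.spec v' d hvv'
      rw [hkv] at hov
      simp only [Option.map_some, Option.some.injEq] at hov
      set Sj := ((ts.take j).map (fun s => s.enc.length)).sum with hSj
      have hsv2 : 2 ≤ sv.enc.length := RTree.two_le_enc_length sv
      obtain rfl : j = i := by
        by_contra hne
        rcases Nat.lt_or_ge j i with hji | hij
        · have h1 : Sj + d.enc.length ≤ Si := by
            rw [hSi, hSj, ← sum_take_succ ts j d hd]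
            exact sum_take_mono ts hji
          omega
        · have hij' : i < j := by omega
          have h1 : Si + c.enc.length ≤ Sj := by
            rw [hSi, hSj, ← sum_take_succ ts i c hc]
            exact sum_take_mono ts hij'
          omega
      obtain rfl : c = d := by rw [hc] at hd; injection hd
      have h1 : ku ≤ kv := by omega
      have h2 : kv < ku + su.enc.length := by omega
      have hpre : u' <+: v' := RTree.ord u' c v' hku hsu hkv hvv' h1 h2
      exact List.cons_prefix_cons.mpr ⟨rfl, hpre⟩

theorem RTree.closePos_eq {t : RTree} {p : List ℕ} {o : ℕ} {s : RTree}
    (ho : t.openPos p = some o) (hs : t.subtreeAt p = some s) :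
    t.closePos p = some (o + s.enc.length - 1) := by
  unfold RTree.closePos; rw [ho, hs]; rfl

/-- Correctness of the marked-ancestor encoding.  Let `x` be an unmarked node with
opening parenthesis at position `ox`.
(i) If no marked parenthesis position lies at or before `ox`, then `x` has no
marked proper ancestor.
Otherwise let `y` be the rightmost marked parenthesis position `≤ ox`.
(ii) If `y` is the opening parenthesis of a marked node `u`, then `u` is the lowest
marked ancestor of `x`.
(iii) If `y` is the closing parenthesis of a marked node `v`, then the marked proper
ancestors of `x` are exactly the marked proper ancestors of `v` (so the lowest marked
ancestor of `x` is the marked node whose pair most tightly encloses `v`'s pair in the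
restricted sequence, and `x` has no marked ancestor if no such enclosing pair exists). -/
theorem lowest_marked_ancestor_correct (t : RTree) (Marked : List ℕ → Prop)
    (x : List ℕ) (hx : t.Valid x) (hxm : ¬ Marked x)
    (ox : ℕ) (hox : t.openPos x = some ox) :
    ((¬ ∃ y : ℕ, MarkedPos t Marked y ∧ y ≤ ox) →
        ¬ ∃ u : List ℕ, t.Valid u ∧ Marked u ∧ StrictAnc u x) ∧
    ∀ y : ℕ, MarkedPos t Marked y → y ≤ ox →
      (∀ z : ℕ, MarkedPos t Marked z → z ≤ ox → z ≤ y) →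
      ((∀ u : List ℕ, t.Valid u → Marked u → t.openPos u = some y →
          t.Valid u ∧ Marked u ∧ StrictAnc u x ∧
            ∀ w : List ℕ, t.Valid w → Marked w → StrictAnc w x → w <+: u) ∧
       (∀ v : List ℕ, t.Valid v → Marked v → t.closePos v = some y →
          {u : List ℕ | t.Valid u ∧ Marked u ∧ StrictAnc u x} =
            {u : List ℕ | t.Valid u ∧ Marked u ∧ StrictAnc u v})) := by
  obtain ⟨sx, hsx⟩ : ∃ s, t.subtreeAt x = some s := Option.isSome_iff_exists.mp hx
  have hLx : 2 ≤ sx.enc.length := RTree.two_le_enc_length sx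
  constructor
  · rintro hno ⟨u, hvu, hmu, hanc⟩
    obtain ⟨ou, su, hou, hsu, -, -⟩ := RTree.spec u t hvu
    obtain ⟨h1, h2⟩ := RTree.nest_strict hanc.1 hanc.2 hou hsu hox hsx
    exact hno ⟨ou, ⟨u, hvu, hmu, Or.inl hou⟩, by omega⟩
  · intro y hy hyle hmax
    constructor
    · -- case (ii): y is an opening parenthesis of marked u
      intro u hvu hmu hu
      obtain ⟨su, hsu⟩ : ∃ s, t.subtreeAt u = some s := Option.isSome_iff_exists.mp hvu
      have hLu : 2 ≤ su.enc.length := RTree.two_le_enc_length su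
      have hcu := RTree.closePos_eq hu hsu
      have hoxle : ox ≤ y + su.enc.length - 1 := by
        by_contra hcon
        have := hmax (y + su.enc.length - 1) ⟨u, hvu, hmu, Or.inr hcu⟩ (by omega)
        omega
      have hpre : u <+: x := RTree.ord u t x hu hsu hox hx hyle (by omega)
      have hne : u ≠ x := by rintro rfl; exact hxm hmu
      refine ⟨hvu, hmu, ⟨hpre, hne⟩, ?_⟩
      intro w hvw hmw hanc
      obtain ⟨ow, sw, how, hsw, -, -⟩ := RTree.spec w t hvw
      obtain ⟨h1, h2⟩ := RTree.nest_strict hanc.1 hanc.2 how hsw hox hsx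
      have howy : ow ≤ y := hmax ow ⟨w, hvw, hmw, Or.inl how⟩ (by omega)
      rcases List.prefix_or_prefix_of_prefix hanc.1 hpre with h | h
      · exact h
      · by_cases heq : u = w
        · exact heq ▸ List.prefix_refl u
        · obtain ⟨h3, -⟩ := RTree.nest_strict h heq hu hsu how hsw
          omega
    · -- case (iii): y is a closing parenthesis of marked v
      intro v hvv hmv hcv
      obtain ⟨ov, sv, hov, hsv, -, -⟩ := RTree.spec v t hvv
      have hLv : 2 ≤ sv.enc.length := RTree.two_le_enc_length sv
      have hy' : y = ov + sv.enc.length - 1 := by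
        rw [RTree.closePos_eq hov hsv] at hcv; injection hcv with h; exact h.symm
      have hyne : y ≠ ox := by
        intro h
        have c1 := RTree.char_close hov hsv
        have c2 := RTree.char_open hox hsx
        rw [← hy', h, c2] at c1
        injection c1 with c1
        exact Bool.noConfusion c1
      have hylt : y < ox := lt_of_le_of_ne hyle hyne
      ext u
      simp only [Set.mem_setOf_eq]
      constructor
      · rintro ⟨hvu, hmu, hanc⟩
        obtain ⟨ou, su, hou, hsu, -, -⟩ := RTree.spec u t hvu
        have hLu : 2 ≤ su.enc.length := RTree.two_le_enc_length su
        obtain ⟨h1, h2⟩ := RTree.nest_strict hanc.1 hanc.2 hou hsu hox hsx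
        have houy : ou ≤ y := hmax ou ⟨u, hvu, hmu, Or.inl hou⟩ (by omega)
        have houny : ou ≠ y := by
          intro h
          have c1 := RTree.char_open hou hsu
          have c2 := RTree.char_close hov hsv
          rw [← hy'] at c2
          rw [h, c2] at c1
          injection c1 with c1
          exact Bool.noConfusion c1
        have hune : u ≠ v := by
          rintro rfl
          have e1 : ou = ov := by rw [hou] at hov; injection hov
          have e2 : su = sv := by rw [hsu] at hsv; injection hsv
          rw [e2] at h2
          omega
        refine ⟨hvu, hmu, ?_, hune⟩
        rcases Nat.lt_or_ge ov ou with hcase | hcase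
        case inr => exact RTree.ord u t v hou hsu hov hvv hcase (by omega)
        · exfalso
          have hvu' : v <+: u :=
            RTree.ord v t u hov hsv hou (RTree.valid_of_subtreeAt hsu) (by omega) (by omega)
          obtain ⟨h3, h4⟩ := RTree.nest_strict hvu' (Ne.symm hune) hov hsv hou hsu
          omega
      · rintro ⟨hvu, hmu, hanc⟩
        obtain ⟨ou, su, hou, hsu, -, -⟩ := RTree.spec u t hvu
        have hLu : 2 ≤ su.enc.length := RTree.two_le_enc_length su
        obtain ⟨h1, h2⟩ := RTree.nest_strict hanc.1 hanc.2 hou hsu hov hsv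
        have hcu := RTree.closePos_eq hou hsu
        have hoxcu : ox < ou + su.enc.length - 1 := by
          by_contra hcon
          have := hmax (ou + su.enc.length - 1) ⟨u, hvu, hmu, Or.inr hcu⟩ (by omega)
          omega
        have hpre : u <+: x := RTree.ord u t x hou hsu hox hx (by omega) (by omega)
        have hne : u ≠ x := by rintro rfl; exact hxm hmu
        exact ⟨hvu, hmu, hpre, hne⟩
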